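/- Let a, b, c > 0 with a < b and with a, b, c satisfying the triangle inequalities (a+b > c, b+c > a, c+a > b). Let S be the area of the hyperbolic triangle with sides a, b, c and S′ the area of the hyperbolic (isosceles) triangle with sides (a+b)/2, (a+b)/2, c. Then S < S′. -/
import Mathlib


open Real

/-- The area of the hyperbolic triangle with side lengths `a, b, c`, computed via the
hyperbolic Heron formula `tan²(S/2) = tanh(s/2)·tanh((s-a)/2)·tanh((s-b)/2)·tanh((s-c)/2)`
with `s = (a+b+c)/2` (so `(s-a)/2 = (b+c-a)/4`, etc.). -/
noncomputable def hHeronArea (a b c : ℝ) : ℝ :=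
  2 * Real.arctan (Real.sqrt (Real.tanh ((a + b + c) / 4) * Real.tanh ((b + c - a) / 4) *
    Real.tanh ((c + a - b) / 4) * Real.tanh ((a + b - c) / 4)))

lemma tanh_pos_of_pos {x : ℝ} (hx : 0 < x) : 0 < Real.tanh x := by
  rw [Real.tanh_eq_sinh_div_cosh]
  exact div_pos (Real.sinh_pos_iff.2 hx) (Real.cosh_pos x)

lemma key_tanh (x y : ℝ) (hx : 0 < x) (hy : 0 < y) (hxy : x ≠ y) :
    Real.tanh x * Real.tanh y < Real.tanh ((x + y) / 2) ^ 2 := by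
  have hC : Real.cosh x * Real.cosh y = (Real.cosh (x + y) + Real.cosh (x - y)) / 2 := by
    rw [Real.cosh_add, Real.cosh_sub]; ring
  have hS : Real.sinh x * Real.sinh y = (Real.cosh (x + y) - Real.cosh (x - y)) / 2 := by
    rw [Real.cosh_add, Real.cosh_sub]; ring
  have h2m : Real.cosh (x + y) = 2 * Real.cosh ((x + y) / 2) ^ 2 - 1 := by
    have := Real.cosh_two_mul ((x + y) / 2)
    rw [show 2 * ((x + y) / 2) = x + y by ring] at this
    have h2 := Real.cosh_sq ((x + y) / 2)
    linarith
  have hs2 : Real.sinh ((x + y) / 2) ^ 2 = (Real.cosh (x + y) - 1) / 2 := by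
    have := Real.cosh_sq ((x + y) / 2)
    linarith
  have hD : 1 < Real.cosh (x - y) := Real.one_lt_cosh.2 (sub_ne_zero.2 hxy)
  have hcx := Real.cosh_pos x
  have hcy := Real.cosh_pos y
  have hcm := Real.cosh_pos ((x + y) / 2)
  have hCpos : 0 < Real.cosh (x + y) := Real.cosh_pos _
  rw [Real.tanh_eq_sinh_div_cosh, Real.tanh_eq_sinh_div_cosh, Real.tanh_eq_sinh_div_cosh,
    div_pow, div_mul_div_comm, div_lt_div_iff₀ (by positivity) (by positivity)]
  nlinarith [sq_nonneg (Real.cosh ((x + y) / 2))]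

/-- Averaging two unequal sides of a hyperbolic triangle, keeping the third side (and hence
the perimeter) fixed, strictly increases the area. -/
theorem hyperbolic_average_increases_area (a b c : ℝ)
    (ha : 0 < a) (hb : 0 < b) (hc : 0 < c) (hab : a < b)
    (htri₁ : a + b > c) (htri₂ : b + c > a) (htri₃ : c + a > b) :
    hHeronArea a b c < hHeronArea ((a + b) / 2) ((a + b) / 2) c := by
  unfold hHeronArea
  have e1 : ((a + b) / 2 + (a + b) / 2 + c) / 4 = (a + b + c) / 4 := by ring
  have e2 : ((a + b) / 2 + c - (a + b) / 2) / 4 = c / 4 := by ring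
  have e3 : (c + (a + b) / 2 - (a + b) / 2) / 4 = c / 4 := by ring
  have e4 : ((a + b) / 2 + (a + b) / 2 - c) / 4 = (a + b - c) / 4 := by ring
  rw [e1, e2, e3, e4]
  have hT : 0 < Real.tanh ((a + b + c) / 4) := tanh_pos_of_pos (by linarith)
  have hW : 0 < Real.tanh ((a + b - c) / 4) := tanh_pos_of_pos (by linarith)
  have hx : (0:ℝ) < (b + c - a) / 4 := by linarith
  have hy : (0:ℝ) < (c + a - b) / 4 := by linarith
  have hu : 0 < Real.tanh ((b + c - a) / 4) := tanh_pos_of_pos hx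
  have hv : 0 < Real.tanh ((c + a - b) / 4) := tanh_pos_of_pos hy
  have hkey := key_tanh ((b + c - a) / 4) ((c + a - b) / 4) hx hy
    (by intro h; apply hab.ne; linarith [h])
  rw [show ((b + c - a) / 4 + (c + a - b) / 4) / 2 = c / 4 by ring] at hkey
  have hlt : Real.tanh ((a + b + c) / 4) * Real.tanh ((b + c - a) / 4) *
      Real.tanh ((c + a - b) / 4) * Real.tanh ((a + b - c) / 4) <
      Real.tanh ((a + b + c) / 4) * Real.tanh (c / 4) * Real.tanh (c / 4) *
      Real.tanh ((a + b - c) / 4) := by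
    have h := mul_lt_mul_of_pos_right (mul_lt_mul_of_pos_left hkey hT) hW
    calc Real.tanh ((a + b + c) / 4) * Real.tanh ((b + c - a) / 4) *
        Real.tanh ((c + a - b) / 4) * Real.tanh ((a + b - c) / 4)
        = Real.tanh ((a + b + c) / 4) * (Real.tanh ((b + c - a) / 4) *
          Real.tanh ((c + a - b) / 4)) * Real.tanh ((a + b - c) / 4) := by ring
      _ < Real.tanh ((a + b + c) / 4) * Real.tanh (c / 4) ^ 2 * Real.tanh ((a + b - c) / 4) := h
      _ = Real.tanh ((a + b + c) / 4) * Real.tanh (c / 4) * Real.tanh (c / 4) *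
          Real.tanh ((a + b - c) / 4) := by ring
  gcongr 2 * ?_
  exact Real.arctan_strictMono (Real.sqrt_lt_sqrt (by positivity) hlt)
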